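/- The group with presentation ⟨u, v | u⁴ = 1, u² = v³⟩ is isomorphic to SL(2,ℤ), via u ↦ [[0,−1],[1,0]] and v ↦ [[0,−1],[1,1]]. -/

import Mathlib

/-- The relations u⁴ = 1 and u² = v³ (as elements of the free group on two
generators, with u the 0th and v the 1st generator). -/
def sl2Rels : Set (FreeGroup (Fin 2)) :=
  {FreeGroup.of 0 ^ 4, FreeGroup.of 0 ^ 2 * (FreeGroup.of 1 ^ 3)⁻¹}

def uMat : Matrix.SpecialLinearGroup (Fin 2) ℤ :=
  ⟨!![0, -1; 1, 0], by norm_num [Matrix.det_fin_two_of]⟩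

def vMat : Matrix.SpecialLinearGroup (Fin 2) ℤ :=
  ⟨!![0, -1; 1, 1], by norm_num [Matrix.det_fin_two_of]⟩

local notation "SL2Z" => Matrix.SpecialLinearGroup (Fin 2) ℤ

lemma uMat_sq : uMat ^ 2 = -1 := by
  apply Matrix.SpecialLinearGroup.ext
  intro i j
  rw [Matrix.SpecialLinearGroup.coe_pow]
  fin_cases i <;> fin_cases j <;>
    simp [uMat, pow_two, Matrix.SpecialLinearGroup.coe_mul, Matrix.mul_fin_two]

lemma uMat_pow4 : uMat ^ 4 = 1 := by
  have : uMat ^ 4 = (uMat ^ 2) ^ 2 := by rw [← pow_mul]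
  rw [this, uMat_sq]; ext i j; simp

lemma vMat_cube : vMat ^ 3 = -1 := by
  apply Matrix.SpecialLinearGroup.ext
  intro i j
  rw [Matrix.SpecialLinearGroup.coe_pow]
  fin_cases i <;> fin_cases j <;>
    simp [vMat, pow_succ, Matrix.SpecialLinearGroup.coe_mul, Matrix.mul_fin_two]

open Matrix

/-- Möbius action of an integer matrix on a real number. -/
noncomputable def moeb (g : SL2Z) (x : ℝ) : ℝ :=
  ((g 0 0 : ℝ) * x + (g 0 1)) / ((g 1 0 : ℝ) * x + (g 1 1))

lemma det_coe' (g : SL2Z) : (g 0 0 : ℤ) * g 1 1 - g 0 1 * g 1 0 = 1 := by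
  have := g.2
  rwa [Matrix.det_fin_two] at this

lemma denom_ne_zero (g : SL2Z) {x : ℝ} (hx : Irrational x) :
    (g 1 0 : ℝ) * x + (g 1 1) ≠ 0 := by
  intro h
  rcases eq_or_ne (g 1 0) 0 with h0 | h0
  · rw [h0] at h
    push_cast at h
    simp at h
    have : (g 1 1 : ℤ) = 0 := by exact_mod_cast h
    have hd := det_coe' g
    rw [h0, this] at hd
    simp at hd
  · apply hx.ne_rat (-(g 1 1 : ℚ) / (g 1 0 : ℚ))
    have hc : ((g 1 0 : ℚ) : ℝ) ≠ 0 := by exact_mod_cast (Int.cast_ne_zero (α := ℝ)).2 h0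
    push_cast
    rw [eq_div_iff (by exact_mod_cast h0)]
    push_cast
    linarith [h]

lemma moeb_irrational (g : SL2Z) {x : ℝ} (hx : Irrational x) : Irrational (moeb g x) := by
  rw [Irrational]
  rintro ⟨q, hq⟩
  have hden := denom_ne_zero g hx
  rw [moeb] at hq
  rw [eq_comm, div_eq_iff hden] at hq
  -- (a - q c) x = q d - b
  rcases eq_or_ne ((g 0 0 : ℝ) - q * g 1 0) 0 with h0 | h0
  · -- a = q c, then b = q d, det zero
    have hax : ((g 0 0 : ℝ) - q * g 1 0) * x = 0 := by rw [h0, zero_mul]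
    have hb : (g 0 1 : ℝ) = q * g 1 1 := by nlinarith [hq, hax]
    have hdet : ((g 0 0 : ℝ)) * g 1 1 - g 0 1 * g 1 0 = 1 := by exact_mod_cast det_coe' g
    have ha : (g 0 0 : ℝ) = q * g 1 0 := by linarith
    rw [ha, hb] at hdet
    have hx0 : (g 1 0 : ℝ) * x + g 1 1 ≠ 0 := hden
    nlinarith [hdet]
  · apply hx.ne_rat ((q * (g 1 1 : ℚ) - g 0 1) / (g 0 0 - q * g 1 0))
    have h0' : ((g 0 0 : ℚ) - q * g 1 0) ≠ 0 := by
      intro hh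
      apply h0
      have : (((g 0 0 : ℚ) - q * g 1 0 : ℚ) : ℝ) = 0 := by rw [hh]; simp
      push_cast at this
      linarith
    push_cast
    rw [eq_div_iff (by push_cast at h0' ⊢; convert h0' using 2 <;> norm_cast)]
    push_cast
    nlinarith [hq]

lemma coe_mul_entry (g h : SL2Z) (i j : Fin 2) :
    ((g * h : SL2Z) i j : ℤ) = g i 0 * h 0 j + g i 1 * h 1 j := by
  rw [Matrix.SpecialLinearGroup.coe_mul, Matrix.mul_apply, Fin.sum_univ_two]

lemma moeb_one (x : ℝ) : moeb 1 x = x := by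
  simp [moeb, Matrix.SpecialLinearGroup.coe_one]

lemma moeb_mul (g h : SL2Z) {x : ℝ} (hx : Irrational x) :
    moeb (g * h) x = moeb g (moeb h x) := by
  have hdh : (h 1 0 : ℝ) * x + (h 1 1) ≠ 0 := denom_ne_zero h hx
  have hirr : Irrational (moeb h x) := moeb_irrational h hx
  have hdg : (g 1 0 : ℝ) * (moeb h x) + (g 1 1) ≠ 0 := denom_ne_zero g hirr
  have hdgh : ((g * h : SL2Z) 1 0 : ℝ) * x + ((g * h : SL2Z) 1 1) ≠ 0 :=
    denom_ne_zero (g * h) hx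
  rw [moeb, moeb, div_eq_div_iff hdgh hdg, moeb]
  rw [coe_mul_entry, coe_mul_entry, coe_mul_entry, coe_mul_entry]
  push_cast
  field_simp
  ring

/-- The type of irrational real numbers. -/
def Irr : Type := {x : ℝ // Irrational x}

noncomputable instance : MulAction SL2Z Irr where
  smul g x := ⟨moeb g x.1, moeb_irrational g x.2⟩
  one_smul x := Subtype.ext (moeb_one x.1)
  mul_smul g h x := Subtype.ext (moeb_mul g h x.2)

lemma smul_val (g : SL2Z) (x : Irr) : (g • x).1 = moeb g x.1 := rfl

/-- The action homomorphism into permutations of the irrationals. -/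
noncomputable def mu : SL2Z →* Equiv.Perm Irr := MulAction.toPermHom SL2Z Irr

noncomputable def sig : Equiv.Perm Irr := mu uMat
noncomputable def tau : Equiv.Perm Irr := mu vMat

lemma uMat_entries : (uMat 0 0 : ℤ) = 0 ∧ (uMat 0 1 : ℤ) = -1 ∧ (uMat 1 0 : ℤ) = 1
    ∧ (uMat 1 1 : ℤ) = 0 := by
  refine ⟨rfl, rfl, rfl, rfl⟩

lemma sig_val (x : Irr) : (sig x).1 = -1 / x.1 := by
  show moeb uMat x.1 = -1 / x.1
  rw [moeb]
  norm_num [uMat_entries.1, uMat_entries.2.1, uMat_entries.2.2.1, uMat_entries.2.2.2]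

lemma tau_val (x : Irr) : (tau x).1 = -1 / (x.1 + 1) := by
  show moeb vMat x.1 = -1 / (x.1 + 1)
  rw [moeb]
  have h0 : (vMat 0 0 : ℤ) = 0 := rfl
  have h1 : (vMat 0 1 : ℤ) = -1 := rfl
  have h2 : (vMat 1 0 : ℤ) = 1 := rfl
  have h3 : (vMat 1 1 : ℤ) = 1 := rfl
  norm_num [h0, h1, h2, h3]

lemma mu_neg_one : mu (-1) = 1 := by
  ext x
  refine Subtype.ext ?_
  show moeb (-1) x.1 = x.1
  have h0 : ((-1 : SL2Z) 0 0 : ℤ) = -1 := rfl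
  have h1 : ((-1 : SL2Z) 0 1 : ℤ) = 0 := rfl
  have h2 : ((-1 : SL2Z) 1 0 : ℤ) = 0 := rfl
  have h3 : ((-1 : SL2Z) 1 1 : ℤ) = -1 := rfl
  rw [moeb, h0, h1, h2, h3]
  push_cast
  field_simp
  ring

lemma sig_sq : sig ^ 2 = 1 := by
  rw [sig, ← map_pow, uMat_sq, mu_neg_one]

lemma tau_cube : tau ^ 3 = 1 := by
  rw [tau, ← map_pow, vMat_cube, mu_neg_one]

section ZModHom
variable {G : Type*} [Group G]

lemma pow_mod_of_pow_eq_one {g : G} {n : ℕ} (h : g ^ n = 1) (k : ℕ) :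
    g ^ (k % n) = g ^ k := by
  conv_rhs => rw [← Nat.div_add_mod k n]
  rw [pow_add, pow_mul, h, one_pow, one_mul]

/-- Homomorphism from `Multiplicative (ZMod n)` determined by an element with `g ^ n = 1`. -/
def zmodHom (n : ℕ) [NeZero n] (g : G) (h : g ^ n = 1) : Multiplicative (ZMod n) →* G where
  toFun x := g ^ (Multiplicative.toAdd x).val
  map_one' := by
    show g ^ (Multiplicative.toAdd (1 : Multiplicative (ZMod n))).val = 1
    simp
  map_mul' x y := by
    show g ^ (Multiplicative.toAdd x + Multiplicative.toAdd y).val = _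
    rw [ZMod.val_add, pow_mod_of_pow_eq_one h, pow_add]
end ZModHom

open ModularGroup in
lemma uMat_eq_S : uMat = ModularGroup.S := rfl

lemma uMat_mul_T : uMat * ModularGroup.T = vMat := by
  apply Matrix.SpecialLinearGroup.ext
  intro i j
  rw [Matrix.SpecialLinearGroup.coe_mul]
  fin_cases i <;> fin_cases j <;>
    simp [uMat, vMat, ModularGroup.T, Matrix.SpecialLinearGroup.coe_mul, Matrix.mul_fin_two]

lemma natAbs_emod_lt (a c : ℤ) (hc : c ≠ 0) : (a % c).natAbs < c.natAbs := by
  have h1 : 0 ≤ a % c := Int.emod_nonneg a hc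
  have h2 : a % c < |c| := by
    rcases lt_or_gt_of_ne hc with h | h
    · calc a % c = a % (-c) := (Int.emod_neg a c).symm
        _ < -c := Int.emod_lt_of_pos a (by omega)
        _ = |c| := (abs_of_neg h).symm
    · rw [abs_of_pos h]; exact Int.emod_lt_of_pos a h
  have h3 : ((a % c).natAbs : ℤ) < (c.natAbs : ℤ) := by
    rw [Int.natAbs_of_nonneg h1, ← Int.abs_eq_natAbs]; exact h2
  exact_mod_cast h3

open ModularGroup in
lemma mem_closure_ST (g : Matrix.SpecialLinearGroup (Fin 2) ℤ) :
    g ∈ Subgroup.closure {ModularGroup.S, ModularGroup.T} := by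
  set C := Subgroup.closure {ModularGroup.S, ModularGroup.T} with hC
  have hS : ModularGroup.S ∈ C := Subgroup.subset_closure (by simp)
  have hT : ModularGroup.T ∈ C := Subgroup.subset_closure (by simp)
  suffices H : ∀ m : ℕ, ∀ g : Matrix.SpecialLinearGroup (Fin 2) ℤ,
      (g 1 0).natAbs = m → g ∈ C by exact H _ g rfl
  intro m
  induction m using Nat.strong_induction_on with
  | _ m IH =>
    intro g hg
    by_cases hc : g 1 0 = 0
    · -- g = !![a, b; 0, d] with a d = 1
      have hdet := det_coe' g
      rw [hc] at hdet
      simp at hdet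
      rcases Int.eq_one_or_neg_one_of_mul_eq_one' hdet with ⟨ha, hd⟩ | ⟨ha, hd⟩
      · have : g = ModularGroup.T ^ (g 0 1) := by
          apply Matrix.SpecialLinearGroup.ext
          intro i j
          rw [ModularGroup.coe_T_zpow]
          fin_cases i <;> fin_cases j <;> simp [ha, hd, hc]
        rw [this]
        exact Subgroup.zpow_mem _ hT _
      · have : g = uMat ^ 2 * ModularGroup.T ^ (-(g 0 1)) := by
          apply Matrix.SpecialLinearGroup.ext
          intro i j
          rw [uMat_sq, Matrix.SpecialLinearGroup.coe_mul, ModularGroup.coe_T_zpow]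
          fin_cases i <;> fin_cases j <;>
            simp [ha, hd, hc, Matrix.SpecialLinearGroup.coe_neg]
        rw [this, uMat_eq_S]
        exact Subgroup.mul_mem _ (Subgroup.pow_mem _ hS _) (Subgroup.zpow_mem _ hT _)
    · set n : ℤ := -(g 0 0 / g 1 0) with hn
      set h : Matrix.SpecialLinearGroup (Fin 2) ℤ := ModularGroup.S * ModularGroup.T ^ n * g
        with hh
      have hent : h 1 0 = g 0 0 % g 1 0 := by
        have : (h : Matrix (Fin 2) (Fin 2) ℤ) =
            (ModularGroup.S : Matrix (Fin 2) (Fin 2) ℤ) * (ModularGroup.T ^ n :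
              Matrix.SpecialLinearGroup (Fin 2) ℤ) * g := by
          simp [hh, Matrix.SpecialLinearGroup.coe_mul]
        have e : h 1 0 = ((ModularGroup.S : Matrix (Fin 2) (Fin 2) ℤ) *
            ((ModularGroup.T ^ n : Matrix.SpecialLinearGroup (Fin 2) ℤ) :
              Matrix (Fin 2) (Fin 2) ℤ) * (g : Matrix (Fin 2) (Fin 2) ℤ)) 1 0 := by
          rw [← this]
        rw [e, ModularGroup.coe_T_zpow, ModularGroup.coe_S]
        rw [Matrix.eta_fin_two (g : Matrix (Fin 2) (Fin 2) ℤ)]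
        simp [Matrix.mul_fin_two]
        rw [Int.emod_def]
        ring
      have hlt : (h 1 0).natAbs < m := by
        rw [hent, ← hg]
        exact natAbs_emod_lt _ _ hc
      have hmem := IH _ hlt h rfl
      have : g = (ModularGroup.S * ModularGroup.T ^ n)⁻¹ * h := by
        rw [hh]; group
      rw [this]
      exact Subgroup.mul_mem _ (Subgroup.inv_mem _ (Subgroup.mul_mem _ hS (Subgroup.zpow_mem _ hT _))) hmem

namespace SL2ZPres

open PresentedGroup

abbrev P := PresentedGroup sl2Rels

noncomputable def U : P := PresentedGroup.of 0
noncomputable def V : P := PresentedGroup.of 1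

lemma mk_rel_one {r : FreeGroup (Fin 2)} (hr : r ∈ sl2Rels) : PresentedGroup.mk sl2Rels r = 1 := by
  rw [show (PresentedGroup.mk sl2Rels r = 1) ↔ _ from QuotientGroup.eq_one_iff r]
  exact Subgroup.subset_normalClosure hr

lemma relU : U ^ 4 = 1 := by
  have := mk_rel_one (r := FreeGroup.of 0 ^ 4) (by left; rfl)
  rwa [map_pow] at this

lemma relUV : U ^ 2 = V ^ 3 := by
  have := mk_rel_one (r := FreeGroup.of 0 ^ 2 * (FreeGroup.of 1 ^ 3)⁻¹) (by right; rfl)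
  rw [_root_.map_mul, map_inv, map_pow, map_pow] at this
  rw [← mul_inv_eq_one]
  exact this

noncomputable def zP : P := U ^ 2

lemma zP_sq : zP ^ 2 = 1 := by rw [zP, ← pow_mul]; exact relU

lemma zP_comm (g : P) : Commute zP g := by
  have : g ∈ Subgroup.centralizer {zP} := by
    apply PresentedGroup.generated_by sl2Rels (Subgroup.centralizer {zP})
    intro j
    rw [Subgroup.mem_centralizer_iff]
    rintro h ⟨rfl⟩
    fin_cases j
    · show zP * U = U * zP
      rw [zP]; group
    · show zP * V = V * zP
      rw [zP, relUV]; group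
  have h := Subgroup.mem_centralizer_iff.1 this zP rfl
  exact h

instance : (Subgroup.zpowers zP).Normal := by
  constructor
  rintro x ⟨k, rfl⟩ g
  have hc : Commute (zP ^ k) g := (zP_comm g).zpow_left k
  rw [show g * zP ^ k * g⁻¹ = zP ^ k from by rw [← hc.eq]; group]
  exact Subgroup.zpow_mem _ (Subgroup.mem_zpowers zP) k

end SL2ZPres

namespace SL2ZPres

lemma rels_cases {r : FreeGroup (Fin 2)} (hr : r ∈ sl2Rels) :
    r = FreeGroup.of 0 ^ 4 ∨ r = FreeGroup.of 0 ^ 2 * (FreeGroup.of 1 ^ 3)⁻¹ := hr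

noncomputable def piSL : P →* Matrix.SpecialLinearGroup (Fin 2) ℤ :=
  PresentedGroup.toGroup (f := ![uMat, vMat]) (by
    intro r hr
    rcases rels_cases hr with rfl | rfl
    · rw [map_pow, FreeGroup.lift_apply_of]
      show uMat ^ 4 = 1
      exact uMat_pow4
    · rw [_root_.map_mul, map_inv, map_pow, map_pow, FreeGroup.lift_apply_of, FreeGroup.lift_apply_of]
      show uMat ^ 2 * (vMat ^ 3)⁻¹ = 1
      rw [uMat_sq, vMat_cube]
      simp)

lemma piSL_U : piSL U = uMat := PresentedGroup.toGroup.of _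
lemma piSL_V : piSL V = vMat := PresentedGroup.toGroup.of _

def nn : Fin 2 → ℕ := ![2, 3]

instance (i : Fin 2) : NeZero (nn i) := by fin_cases i <;> exact ⟨by norm_num [nn]⟩

abbrev Hf : Fin 2 → Type := fun i => Multiplicative (ZMod (nn i))

def genH (i : Fin 2) : Hf i := Multiplicative.ofAdd 1

lemma genH0_pow4 : genH 0 ^ 4 = 1 := by decide
lemma genH0_pow2 : genH 0 ^ 2 = 1 := by decide
lemma genH1_pow3 : genH 1 ^ 3 = 1 := by decide

noncomputable def cHom : P →* Monoid.CoprodI Hf :=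
  PresentedGroup.toGroup (f := fun i => Monoid.CoprodI.of (genH i)) (by
    intro r hr
    rcases rels_cases hr with rfl | rfl
    · rw [map_pow, FreeGroup.lift_apply_of, ← map_pow, genH0_pow4, _root_.map_one]
    · rw [_root_.map_mul, map_inv, map_pow, map_pow, FreeGroup.lift_apply_of, FreeGroup.lift_apply_of,
        ← map_pow, ← map_pow, genH0_pow2, genH1_pow3, _root_.map_one, _root_.map_one]
      simp)

noncomputable abbrev Qq := P ⧸ Subgroup.zpowers zP

noncomputable def mkQ : P →* Qq := QuotientGroup.mk' (Subgroup.zpowers zP)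

noncomputable def qgen : Fin 2 → Qq := fun i => mkQ (![U, V] i)

lemma qgen_pow (i : Fin 2) : qgen i ^ (nn i) = 1 := by
  fin_cases i
  · show mkQ U ^ 2 = 1
    rw [← map_pow]
    show mkQ zP = 1
    show (QuotientGroup.mk zP : Qq) = 1
    rw [QuotientGroup.eq_one_iff]
    exact Subgroup.mem_zpowers zP
  · show mkQ V ^ 3 = 1
    rw [← map_pow, show V ^ 3 = zP from relUV.symm]
    show (QuotientGroup.mk zP : Qq) = 1
    rw [QuotientGroup.eq_one_iff]
    exact Subgroup.mem_zpowers zP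

noncomputable def dHom : Monoid.CoprodI Hf →* Qq :=
  Monoid.CoprodI.lift (fun i => zmodHom (nn i) (qgen i) (qgen_pow i))

noncomputable def pGen : Fin 2 → Equiv.Perm Irr := ![sig, tau]

lemma pGen_pow (i : Fin 2) : pGen i ^ (nn i) = 1 := by
  fin_cases i
  · exact sig_sq
  · exact tau_cube

noncomputable def fPerm (i : Fin 2) : Hf i →* Equiv.Perm Irr :=
  zmodHom (nn i) (pGen i) (pGen_pow i)

noncomputable def flift : Monoid.CoprodI Hf →* Equiv.Perm Irr := Monoid.CoprodI.lift fPerm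

lemma val_one_zmod2 : (Multiplicative.toAdd (genH 0)).val = 1 := rfl
lemma val_one_zmod3 : (Multiplicative.toAdd (genH 1)).val = 1 := rfl

lemma flift_c : flift.comp cHom = mu.comp piSL := by
  apply PresentedGroup.ext
  intro x
  fin_cases x
  · show flift (cHom (PresentedGroup.of 0)) = mu (piSL (PresentedGroup.of 0))
    rw [show piSL (PresentedGroup.of 0) = uMat from PresentedGroup.toGroup.of _,
      cHom, PresentedGroup.toGroup.of, flift, Monoid.CoprodI.lift_of]
    show pGen 0 ^ (Multiplicative.toAdd (genH 0)).val = mu uMat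
    rw [val_one_zmod2, pow_one]
    rfl
  · show flift (cHom (PresentedGroup.of 1)) = mu (piSL (PresentedGroup.of 1))
    rw [show piSL (PresentedGroup.of 1) = vMat from PresentedGroup.toGroup.of _,
      cHom, PresentedGroup.toGroup.of, flift, Monoid.CoprodI.lift_of]
    show pGen 1 ^ (Multiplicative.toAdd (genH 1)).val = mu vMat
    rw [val_one_zmod3, pow_one]
    rfl

lemma dHom_c : dHom.comp cHom = mkQ := by
  apply PresentedGroup.ext
  intro x
  fin_cases x
  · show dHom (cHom (PresentedGroup.of 0)) = mkQ (PresentedGroup.of 0)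
    rw [cHom, PresentedGroup.toGroup.of, dHom, Monoid.CoprodI.lift_of]
    show qgen 0 ^ (Multiplicative.toAdd (genH 0)).val = mkQ U
    rw [val_one_zmod2, pow_one]
    rfl
  · show dHom (cHom (PresentedGroup.of 1)) = mkQ (PresentedGroup.of 1)
    rw [cHom, PresentedGroup.toGroup.of, dHom, Monoid.CoprodI.lift_of]
    show qgen 1 ^ (Multiplicative.toAdd (genH 1)).val = mkQ V
    rw [val_one_zmod3, pow_one]
    rfl

end SL2ZPres

namespace SL2ZPres

open Monoid

noncomputable def XS : Fin 2 → Set Irr := ![{x | 0 < x.1}, {x | x.1 < 0}]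

lemma hXne : ∀ i, (XS i).Nonempty := by
  intro i
  fin_cases i
  · exact ⟨⟨Real.sqrt 2, irrational_sqrt_two⟩, by
      show (0:ℝ) < Real.sqrt 2
      positivity⟩
  · exact ⟨⟨-Real.sqrt 2, irrational_sqrt_two.neg⟩, by
      show (-Real.sqrt 2 : ℝ) < 0
      have : (0:ℝ) < Real.sqrt 2 := by positivity
      linarith⟩

open Pointwise in
lemma hXdisj : Pairwise (Function.onFun Disjoint XS) := by
  have key : Disjoint (XS 0) (XS 1) := by
    rw [Set.disjoint_left]
    intro x hx hx'
    have h1 : (0:ℝ) < x.1 := hx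
    have h2 : x.1 < 0 := hx'
    linarith
  intro i j hij
  fin_cases i <;> fin_cases j
  · exact absurd rfl hij
  · exact key
  · exact key.symm
  · exact absurd rfl hij

lemma tau_val_pos {y : Irr} (hy : 0 < y.1) : -1 < (tau y).1 ∧ (tau y).1 < 0 := by
  rw [tau_val]
  have h1 : (1:ℝ) < y.1 + 1 := by linarith
  have h0 : (0:ℝ) < y.1 + 1 := by linarith
  constructor
  · have : 1 / (y.1 + 1) < 1 := by rw [div_lt_one h0]; linarith
    have e : -1 / (y.1 + 1) = -(1 / (y.1 + 1)) := by ring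
    rw [e]; linarith
  · exact div_neg_of_neg_of_pos (by norm_num) h0

open Pointwise in
lemma hpp : Pairwise fun i j => ∀ h : Hf i, h ≠ 1 → fPerm i h • XS j ⊆ XS i := by
  have key01 : ∀ h : Hf 0, h ≠ 1 → fPerm 0 h • XS 1 ⊆ XS 0 := by
    intro h hne
    have hval : (Multiplicative.toAdd h).val = 1 := by revert hne; revert h; decide
    have e : fPerm 0 h = sig := by
      show pGen 0 ^ (Multiplicative.toAdd h).val = sig
      rw [hval, pow_one]; rfl
    rw [e]
    rintro _ ⟨y, hy, rfl⟩
    have hy' : y.1 < 0 := hy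
    show 0 < (sig y).1
    rw [sig_val]
    exact div_pos_iff.2 (Or.inr ⟨by norm_num, hy'⟩)
  have key10 : ∀ h : Hf 1, h ≠ 1 → fPerm 1 h • XS 0 ⊆ XS 1 := by
    intro h hne
    have hval : (Multiplicative.toAdd h).val = 1 ∨ (Multiplicative.toAdd h).val = 2 := by
      revert hne; revert h; decide
    have hfp : fPerm 1 h = tau ^ (Multiplicative.toAdd h).val := rfl
    rintro _ ⟨y, hy, rfl⟩
    have hy' : 0 < y.1 := hy
    rcases hval with hv | hv
    · rw [hfp, hv, pow_one]
      show (tau y).1 < 0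
      exact (tau_val_pos hy').2
    · rw [hfp, hv]
      show ((tau ^ 2) y).1 < 0
      have e : (tau ^ 2) y = tau (tau y) := by rw [pow_two]; rfl
      rw [e, tau_val]
      have h1 : 0 < (tau y).1 + 1 := by linarith [(tau_val_pos hy').1]
      exact div_neg_of_neg_of_pos (by norm_num) h1
  intro i j hij
  fin_cases i <;> fin_cases j
  · exact absurd rfl hij
  · exact key01
  · exact key10
  · exact absurd rfl hij

lemma hcard : 3 ≤ Cardinal.mk (Fin 2) ∨ ∃ i, 3 ≤ Cardinal.mk (Hf i) := by
  right
  refine ⟨1, ?_⟩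
  have : Cardinal.mk (Hf 1) = 3 := by
    rw [Cardinal.mk_fintype]
    norm_num
    rfl
  rw [this]

lemma flift_inj : Function.Injective flift :=
  CoprodI.lift_injective_of_ping_pong fPerm hcard XS hXne hXdisj hpp

lemma neg_one_ne_one : (-1 : Matrix.SpecialLinearGroup (Fin 2) ℤ) ≠ 1 := by
  intro heq
  have := congrArg (fun A : Matrix.SpecialLinearGroup (Fin 2) ℤ =>
    (A : Matrix (Fin 2) (Fin 2) ℤ) 0 0) heq
  simp [Matrix.SpecialLinearGroup.coe_neg, Matrix.SpecialLinearGroup.coe_one] at this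

lemma piSL_zP : piSL zP = -1 := by
  show piSL (U ^ 2) = -1
  rw [map_pow, piSL_U, uMat_sq]

lemma piSL_inj : Function.Injective piSL := by
  rw [injective_iff_map_eq_one]
  intro g hg
  have h1 : flift (cHom g) = 1 := by
    have e : flift (cHom g) = (mu.comp piSL) g := DFunLike.congr_fun flift_c g
    rw [e]
    show mu (piSL g) = 1
    rw [hg, _root_.map_one]
  have h2 : cHom g = 1 := flift_inj (by rw [h1, _root_.map_one])
  have h3 : mkQ g = 1 := by
    have e : mkQ g = dHom (cHom g) := (DFunLike.congr_fun dHom_c g).symm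
    rw [e, h2, _root_.map_one]
  have h4 : g ∈ Subgroup.zpowers zP := (QuotientGroup.eq_one_iff g).mp h3
  obtain ⟨k, rfl⟩ := h4
  have hz2 : zP ^ (2 : ℤ) = 1 := by
    rw [show (2:ℤ) = ((2:ℕ):ℤ) from rfl, zpow_natCast]
    exact zP_sq
  rcases Int.even_or_odd k with ⟨m, hm⟩ | ⟨m, hm⟩
  · show zP ^ k = 1
    rw [hm, show m + m = 2 * m by ring, _root_.zpow_mul, hz2, _root_.one_zpow]
  · exfalso
    have hzk : zP ^ k = zP := by
      rw [hm, _root_.zpow_add, _root_.zpow_mul, hz2, _root_.one_zpow, one_mul, zpow_one]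
    have hg' : piSL (zP ^ k) = 1 := hg
    rw [hzk, piSL_zP] at hg'
    exact neg_one_ne_one hg'

lemma piSL_surj : Function.Surjective piSL := by
  intro g
  have hle : Subgroup.closure {ModularGroup.S, ModularGroup.T} ≤ piSL.range := by
    rw [Subgroup.closure_le]
    rintro x (rfl | rfl)
    · exact ⟨U, by rw [piSL_U, uMat_eq_S]⟩
    · refine ⟨U⁻¹ * V, ?_⟩
      rw [_root_.map_mul, map_inv, piSL_U, piSL_V, ← uMat_mul_T]
      group
  exact hle (mem_closure_ST g)

end SL2ZPres


/-- The group ⟨u, v ∣ u⁴ = 1, u² = v³⟩ is isomorphic to SL(2,ℤ) via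
u ↦ [[0,−1],[1,0]] and v ↦ [[0,−1],[1,1]]. -/
theorem presented_group_iso_SL2Z :
    ∃ φ : PresentedGroup sl2Rels ≃* Matrix.SpecialLinearGroup (Fin 2) ℤ,
      φ (PresentedGroup.of 0) = uMat ∧ φ (PresentedGroup.of 1) = vMat := by
  refine ⟨MulEquiv.ofBijective SL2ZPres.piSL ⟨SL2ZPres.piSL_inj, SL2ZPres.piSL_surj⟩, ?_, ?_⟩
  · show SL2ZPres.piSL (PresentedGroup.of 0) = uMat
    exact PresentedGroup.toGroup.of _
  · show SL2ZPres.piSL (PresentedGroup.of 1) = vMat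
    exact PresentedGroup.toGroup.of _
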